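/- Let x ∈ D and k = k_x, and let t ∈ [−1,1]. Then x is an accumulation point of f⁻¹({t}) (i.e., x lies in the closure of f⁻¹({t}) \ {x}) if and only if f(x) − 2^{−k} ≤ t ≤ f(x) + 2^{−k}. -/

import Mathlib

open Set Topology

/-- The Cantor space `2^ℕ`, with coordinates indexed by the positive integers. -/
abbrev Cant : Type := ℕ+ → Bool

/-- The support of a point of the Cantor space, as a set of (positive) natural numbers. -/
def ksupp (x : Cant) : Set ℕ := {i | ∃ h : 0 < i, x ⟨i, h⟩ = true}

open scoped Classical in
/-- Kuratowski's function `f(x) = Σ_j (−1)^{c_x(j)} 2^{−j}`, where `c_x` enumerates the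
support of `x` in increasing order; here the summation index `j : ℕ` is the 0-based
version of the paper's 1-based position index, so the weight is `2^{−(j+1)}`. -/
noncomputable def kf (x : Cant) : ℝ :=
  ∑' j : ℕ, if (ksupp x).Infinite ∨ j < (ksupp x).ncard then
    (-1 : ℝ) ^ (Nat.nth (· ∈ ksupp x) j) * (2 : ℝ) ^ (-(j + 1 : ℤ)) else 0

open scoped Classical in
noncomputable def kterm (x : Cant) (j : ℕ) : ℝ :=
  if (ksupp x).Infinite ∨ j < (ksupp x).ncard then
    (-1 : ℝ) ^ (Nat.nth (· ∈ ksupp x) j) * (2 : ℝ) ^ (-(j + 1 : ℤ)) else 0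


lemma kf_eq (x : Cant) : kf x = ∑' j, kterm x j := rfl

lemma weight_eq (j : ℕ) : (2 : ℝ) ^ (-(j + 1 : ℤ)) = (1/2 : ℝ) ^ (j+1) := by
  rw [zpow_neg, ← zpow_natCast]
  push_cast
  rw [← inv_zpow]
  norm_num

lemma abs_kterm_le (x : Cant) (j : ℕ) : |kterm x j| ≤ (1/2 : ℝ) ^ (j+1) := by
  unfold kterm
  split
  · rw [abs_mul, abs_pow, abs_neg, abs_one, one_pow, one_mul, weight_eq, abs_of_nonneg (by positivity : (0:ℝ) ≤ (1/2:ℝ)^(j+1))]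
  · simp only [abs_zero]; positivity

lemma summable_kterm (x : Cant) : Summable (kterm x) := by
  apply Summable.of_abs
  apply Summable.of_nonneg_of_le (fun j => abs_nonneg _) (abs_kterm_le x)
  have h : Summable (fun j : ℕ => (1/2 : ℝ) ^ j) := summable_geometric_of_lt_one (by norm_num) (by norm_num)
  exact (h.mul_right (1/2 : ℝ)).congr (fun j => by rw [pow_succ])

open scoped Classical in
lemma nth_agree {p q : ℕ → Prop} {M : ℕ} (hpM : ∀ i, p i → i ≤ M)
    (hiff : ∀ i ≤ M, (p i ↔ q i)) (hfin : (setOf p).Finite) {j : ℕ}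
    (hj : j < hfin.toFinset.card) : Nat.nth q j = Nat.nth p j := by
  set c := Nat.nth p j with hc0
  have hc : p c := Nat.nth_mem_of_lt_card hfin hj
  have hcM : c ≤ M := hpM c hc
  have hq : q c := (hiff c hcM).mp hc
  have hcount : Nat.count q c = Nat.count p c := by
    rw [Nat.count_eq_card_filter_range, Nat.count_eq_card_filter_range]
    congr 1
    apply Finset.filter_congr
    intro i hi
    simp only [Finset.mem_range] at hi
    simp [ (hiff i (le_trans hi.le hcM)).symm ]
  have hcp : Nat.count p c = j := Nat.count_nth_of_lt_card_finite hfin hj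
  have := Nat.nth_count hq
  rw [hcount, hcp] at this
  exact this

lemma half_pow (k : ℕ) : (2 : ℝ) ^ (-(k : ℤ)) = (1/2 : ℝ) ^ k := by
  rw [zpow_neg, ← zpow_natCast, ← inv_zpow]
  norm_num

lemma ksupp_iff (x y : Cant) {M : ℕ} (hagree : ∀ i : ℕ+, (i:ℕ) ≤ M → y i = x i) :
    ∀ i ≤ M, (i ∈ ksupp x ↔ i ∈ ksupp y) := by
  intro i hi
  constructor
  · rintro ⟨h, hx⟩; exact ⟨h, by rw [hagree ⟨i, h⟩ hi]; exact hx⟩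
  · rintro ⟨h, hy⟩; exact ⟨h, by rw [← hagree ⟨i, h⟩ hi]; exact hy⟩

open scoped Classical in
lemma kterm_eq_of_agree (x y : Cant) (hx : (ksupp x).Finite) {M : ℕ}
    (hM : ∀ i ∈ ksupp x, i ≤ M)
    (hagree : ∀ i : ℕ+, (i:ℕ) ≤ M → y i = x i) {j : ℕ}
    (hj : j < (ksupp x).ncard) : kterm y j = kterm x j := by
  have hiff := ksupp_iff x y hagree
  have hsub : ksupp x ⊆ ksupp y := fun i hi => (hiff i (hM i hi)).mp hi
  have hcard : j < hx.toFinset.card := by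
    rwa [Set.ncard_eq_toFinset_card _ hx] at hj
  have hsetp : {i | i ∈ ksupp x} = ksupp x := rfl
  have hfinp : (setOf (· ∈ ksupp x)).Finite := hx
  have hnth : Nat.nth (· ∈ ksupp y) j = Nat.nth (· ∈ ksupp x) j :=
    nth_agree (fun i hi => hM i hi) hiff hfinp (by convert hcard using 2; rfl)
  have hcondy : (ksupp y).Infinite ∨ j < (ksupp y).ncard := by
    by_cases hfy : (ksupp y).Finite
    · exact Or.inr (lt_of_lt_of_le hj (Set.ncard_le_ncard hsub hfy))
    · exact Or.inl hfy
  unfold kterm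
  rw [if_pos hcondy, if_pos (Or.inr hj), hnth]

open scoped Classical in
lemma kterm_eq_zero (x : Cant) (hx : (ksupp x).Finite) {j : ℕ}
    (hj : (ksupp x).ncard ≤ j) : kterm x j = 0 := by
  unfold kterm
  rw [if_neg]
  push_neg
  exact ⟨hx, hj⟩

lemma summable_half : Summable (fun j : ℕ => (1/2 : ℝ) ^ j) :=
  summable_geometric_of_lt_one (by norm_num) (by norm_num)

lemma tsum_tail (k : ℕ) : ∑' i : ℕ, (1/2:ℝ)^(i+k+1) = (1/2:ℝ)^k := by
  have h : ∀ i:ℕ, (1/2:ℝ)^(i+k+1) = (1/2:ℝ)^i * (1/2:ℝ)^(k+1) := fun i => by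
    rw [← pow_add]; ring_nf
  rw [tsum_congr h, tsum_mul_right, tsum_geometric_of_lt_one (by norm_num) (by norm_num),
    pow_succ]
  norm_num
  ring

lemma summable_half_shift (k : ℕ) : Summable (fun i : ℕ => (1/2:ℝ)^(i+k+1)) := by
  apply Summable.congr (summable_half.mul_right ((1/2:ℝ)^(k+1)))
  intro i; rw [← pow_add]; ring_nf

set_option maxHeartbeats 2000000 in
lemma kf_dist_le (x y : Cant) (hx : (ksupp x).Finite) {M : ℕ}
    (hM : ∀ i ∈ ksupp x, i ≤ M)
    (hagree : ∀ i : ℕ+, (i:ℕ) ≤ M → y i = x i) :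
    |kf y - kf x| ≤ (2:ℝ)^(-((ksupp x).ncard : ℤ)) := by
  set k := (ksupp x).ncard with hk
  have hsy := summable_kterm y
  have hsx := summable_kterm x
  have h1 : (∑ j ∈ Finset.range k, kterm y j) + ∑' i, kterm y (i+k) = ∑' j, kterm y j :=
    hsy.sum_add_tsum_nat_add k
  have h2 : (∑ j ∈ Finset.range k, kterm x j) + ∑' i, kterm x (i+k) = ∑' j, kterm x j :=
    hsx.sum_add_tsum_nat_add k
  have htx : ∑' i, kterm x (i+k) = 0 := by
    have : ∀ i : ℕ, kterm x (i+k) = 0 := fun i =>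
      kterm_eq_zero x hx (by omega)
    simp [this]
  have hfs : (∑ j ∈ Finset.range k, kterm y j) = ∑ j ∈ Finset.range k, kterm x j := by
    apply Finset.sum_congr rfl
    intro j hj
    exact kterm_eq_of_agree x y hx hM hagree (Finset.mem_range.mp hj)
  have hdiff : kf y - kf x = ∑' i, kterm y (i+k) := by
    rw [kf_eq, kf_eq, ← h1, ← h2, htx, hfs]; ring
  rw [hdiff, half_pow]
  have hsys : Summable (fun i => ‖kterm y (i+k)‖) :=
    (summable_nat_add_iff k).mpr hsy.norm
  calc |∑' i, kterm y (i+k)| ≤ ∑' i, ‖kterm y (i+k)‖ := by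
        rw [← Real.norm_eq_abs]; exact norm_tsum_le_tsum_norm hsys
    _ ≤ ∑' i : ℕ, (1/2:ℝ)^(i+k+1) := by
        apply Summable.tsum_le_tsum _ hsys (summable_half_shift k)
        intro i
        rw [Real.norm_eq_abs]
        exact (abs_kterm_le y (i+k)).trans (le_of_eq (by ring_nf))
    _ = (1/2:ℝ)^k := tsum_tail k

open scoped Classical in
lemma nth_of_range {e : ℕ → ℕ} (he : StrictMono e) {p : ℕ → Prop}
    (hp : ∀ i, p i ↔ ∃ n, e n = i) (n : ℕ) : Nat.nth p n = e n := by
  have hq : p (e n) := (hp (e n)).mpr ⟨n, rfl⟩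
  have hcount : Nat.count p (e n) = n := by
    rw [Nat.count_eq_card_filter_range]
    have heq : (Finset.range (e n)).filter p = (Finset.range n).image e := by
      ext i
      simp only [Finset.mem_filter, Finset.mem_range, Finset.mem_image, hp]
      constructor
      · rintro ⟨hi, m, rfl⟩
        exact ⟨m, he.lt_iff_lt.mp hi, rfl⟩
      · rintro ⟨m, hm, rfl⟩
        exact ⟨he hm, m, rfl⟩
    rw [heq, Finset.card_image_of_injective _ he.injective, Finset.card_range]
  have h := Nat.nth_count hq
  rw [hcount] at h
  exact h

set_option maxHeartbeats 1000000 in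
lemma kf_finite_sum (x : Cant) (hx : (ksupp x).Finite) :
    kf x = ∑ j ∈ Finset.range (ksupp x).ncard, kterm x j := by
  set k := (ksupp x).ncard with hk
  have hsx := summable_kterm x
  have h2 : (∑ j ∈ Finset.range k, kterm x j) + ∑' i, kterm x (i+k) = ∑' j, kterm x j :=
    hsx.sum_add_tsum_nat_add k
  have htx : ∑' i, kterm x (i+k) = 0 := by
    have : ∀ i : ℕ, kterm x (i+k) = 0 := fun i => kterm_eq_zero x hx (by omega)
    simp [this]
  rw [kf_eq, ← h2, htx, add_zero]

noncomputable def rem (s : ℝ) (k : ℕ) : ℕ → ℝ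
  | 0 => s
  | (i+1) => rem s k i - (if 0 ≤ rem s k i then (1:ℝ) else -1) * (1/2:ℝ)^(k+i+1)

noncomputable def sg (s : ℝ) (k : ℕ) (i : ℕ) : ℝ := if 0 ≤ rem s k i then (1:ℝ) else -1

lemma rem_succ (s : ℝ) (k i : ℕ) :
    rem s k (i+1) = rem s k i - sg s k i * (1/2:ℝ)^(k+i+1) := rfl

lemma abs_rem {s : ℝ} {k : ℕ} (hs : |s| ≤ (1/2:ℝ)^k) (i : ℕ) :
    |rem s k i| ≤ (1/2:ℝ)^(k+i) := by
  induction i with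
  | zero => simpa [rem] using hs
  | succ i ih =>
    rw [rem_succ, sg]
    rw [abs_le] at ih ⊢
    have hw : (1/2:ℝ)^(k+(i+1)) = (1/2:ℝ)^(k+i) / 2 := by
      rw [show k+(i+1) = (k+i)+1 by ring, pow_succ]; ring
    rw [hw]
    rw [show k+i+1 = (k+i)+1 by ring, pow_succ]
    split
    · constructor <;> nlinarith [ih.1, ih.2, ‹0 ≤ rem s k i›]
    · constructor <;> nlinarith [ih.1, ih.2, not_le.mp ‹¬ 0 ≤ rem s k i›]

lemma sum_sg (s : ℝ) (k : ℕ) (n : ℕ) :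
    ∑ i ∈ Finset.range n, sg s k i * (1/2:ℝ)^(k+i+1) = s - rem s k n := by
  induction n with
  | zero => simp [rem]
  | succ n ih => rw [Finset.sum_range_succ, ih, rem_succ]; ring

lemma summable_sg (s : ℝ) (k : ℕ) : Summable (fun i => sg s k i * (1/2:ℝ)^(k+i+1)) := by
  apply Summable.of_norm
  have : ∀ i, ‖sg s k i * (1/2:ℝ)^(k+i+1)‖ = (1/2:ℝ)^(i+k+1) := by
    intro i
    rw [norm_mul, sg]
    have : ‖(1/2:ℝ)^(k+i+1)‖ = (1/2:ℝ)^(i+k+1) := by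
      rw [Real.norm_eq_abs, abs_of_nonneg (by positivity)]; ring_nf
    split <;> simp [this, Nat.add_comm]
  rw [show (fun i => ‖sg s k i * (1/2:ℝ)^(k+i+1)‖) = fun i => (1/2:ℝ)^(i+k+1) from funext this]
  exact summable_half_shift k

lemma hasSum_sg {s : ℝ} {k : ℕ} (hs : |s| ≤ (1/2:ℝ)^k) :
    HasSum (fun i => sg s k i * (1/2:ℝ)^(k+i+1)) s := by
  have hsum := (summable_sg s k).hasSum
  have h1 : Filter.Tendsto (fun n => ∑ i ∈ Finset.range n, sg s k i * (1/2:ℝ)^(k+i+1))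
      Filter.atTop (nhds (∑' i, sg s k i * (1/2:ℝ)^(k+i+1))) := hsum.tendsto_sum_nat
  have hrem : Filter.Tendsto (fun n => rem s k n) Filter.atTop (nhds 0) := by
    have h0 := tendsto_pow_atTop_nhds_zero_of_lt_one (by norm_num : (0:ℝ) ≤ 1/2)
      (by norm_num : (1/2:ℝ) < 1)
    have h2 : Filter.Tendsto (fun n : ℕ => (1/2:ℝ)^(k+n)) Filter.atTop (nhds 0) := by
      have := h0.comp (Filter.tendsto_add_atTop_nat k)
      simpa [Function.comp_def, Nat.add_comm] using this
    exact squeeze_zero_norm (fun n => by rw [Real.norm_eq_abs]; exact abs_rem hs n) h2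
  have h2 : Filter.Tendsto (fun n => ∑ i ∈ Finset.range n, sg s k i * (1/2:ℝ)^(k+i+1))
      Filter.atTop (nhds s) := by
    simp only [sum_sg]
    have := Filter.Tendsto.sub (tendsto_const_nhds (x := s)) hrem
    simpa using this
  have := tendsto_nhds_unique h1 h2
  rwa [this] at hsum

open scoped Classical in
set_option maxHeartbeats 2000000 in
lemma exists_point (x : Cant) (hx : (ksupp x).Finite) {M : ℕ}
    (hM : ∀ i ∈ ksupp x, i ≤ M) {t : ℝ}
    (h1 : kf x - (2:ℝ)^(-((ksupp x).ncard:ℤ)) ≤ t)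
    (h2 : t ≤ kf x + (2:ℝ)^(-((ksupp x).ncard:ℤ))) :
    ∃ y : Cant, y ≠ x ∧ kf y = t ∧ ∀ i : ℕ+, (i:ℕ) ≤ M → y i = x i := by
  set k := (ksupp x).ncard with hk
  set s := t - kf x with hsdef
  have hs : |s| ≤ (1/2:ℝ)^k := by
    rw [abs_le, ← half_pow]
    constructor <;> [linarith; linarith]
  have hcard : hx.toFinset.card = k := (Set.ncard_eq_toFinset_card _ hx).symm
  -- the extra elements
  set b : ℕ → ℕ := fun i => 2*(M+i+1) + (if 0 ≤ rem s k i then 0 else 1) with hbdef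
  have hbM : ∀ i, M < b i := by
    intro i; simp only [hbdef]; split <;> omega
  have hb_mono : StrictMono b := by
    apply strictMono_nat_of_lt_succ
    intro i
    simp only [hbdef]
    split <;> split <;> omega
  have hbneg : ∀ i, (-1:ℝ)^(b i) = sg s k i := by
    intro i
    simp only [hbdef, sg]
    split
    · exact Even.neg_one_pow ⟨M+i+1, by omega⟩
    · exact Odd.neg_one_pow ⟨M+i+1, by omega⟩
  -- membership facts about nth of x
  have hnthx_mem : ∀ j < k, Nat.nth (· ∈ ksupp x) j ∈ ksupp x := by
    intro j hj
    exact Nat.nth_mem_of_lt_card hx (by rwa [hcard])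
  have hnthx_le : ∀ j < k, Nat.nth (· ∈ ksupp x) j ≤ M := fun j hj => hM _ (hnthx_mem j hj)
  -- the enumeration
  set e : ℕ → ℕ := fun j => if j < k then Nat.nth (· ∈ ksupp x) j else b (j - k) with hedef
  have he_mono : StrictMono e := by
    apply strictMono_nat_of_lt_succ
    intro j
    simp only [hedef]
    by_cases hj1 : j + 1 < k
    · rw [if_pos (by omega), if_pos hj1]
      exact Nat.nth_lt_nth_of_lt_card hx (by omega) (by rw [← hcard] at hj1; exact hj1)
    · by_cases hj : j < k
      · rw [if_pos hj, if_neg hj1]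
        exact lt_of_le_of_lt (hnthx_le j hj) (hbM _)
      · rw [if_neg hj, if_neg hj1]
        exact hb_mono (by omega)
  have he_pos : ∀ n, 0 < e n := by
    intro n
    simp only [hedef]
    split
    · obtain ⟨h0, -⟩ := hnthx_mem n ‹_›; exact h0
    · have := hbM (n - k); omega
  -- the point y
  set y : Cant := fun i => decide (∃ n, e n = (i:ℕ)) with hydef
  have hrange : ∀ i : ℕ, (i ∈ ksupp y ↔ ∃ n, e n = i) := by
    intro i
    constructor
    · rintro ⟨h0, hy⟩
      simp only [hydef, decide_eq_true_eq] at hy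
      exact hy
    · rintro ⟨n, rfl⟩
      exact ⟨he_pos n, by simp only [hydef, decide_eq_true_eq]; exact ⟨n, rfl⟩⟩
  have hinf : (ksupp y).Infinite := by
    have : ksupp y = Set.range e := by
      ext i; rw [hrange]; simp [Set.mem_range]
    rw [this]
    exact Set.infinite_range_of_injective he_mono.injective
  have hnth_y : ∀ j, Nat.nth (· ∈ ksupp y) j = e j := nth_of_range he_mono hrange
  have hterm_y : ∀ j, kterm y j = (-1:ℝ)^(e j) * (2:ℝ)^(-(j+1:ℤ)) := by
    intro j
    unfold kterm
    rw [if_pos (Or.inl hinf), hnth_y]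
  -- kf y = t
  have hkfy : kf y = t := by
    have hsy := summable_kterm y
    have hsplit : (∑ j ∈ Finset.range k, kterm y j) + ∑' i, kterm y (i+k) = ∑' j, kterm y j :=
      hsy.sum_add_tsum_nat_add k
    have hhead : (∑ j ∈ Finset.range k, kterm y j) = kf x := by
      rw [kf_finite_sum x hx]
      apply Finset.sum_congr rfl
      intro j hj
      have hjk : j < k := Finset.mem_range.mp hj
      rw [hterm_y j]
      unfold kterm
      rw [if_pos (Or.inr hjk), hedef]
      simp only [if_pos hjk]
    have htail : ∑' i, kterm y (i+k) = s := by
      have heq : ∀ i : ℕ, kterm y (i+k) = sg s k i * (1/2:ℝ)^(k+i+1) := by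
        intro i
        rw [hterm_y (i+k), hedef]
        simp only [if_neg (by omega : ¬ i + k < k)]
        rw [show i + k - k = i by omega, hbneg i, weight_eq]
        ring_nf
      rw [tsum_congr heq, (hasSum_sg hs).tsum_eq]
    rw [kf_eq, ← hsplit, hhead, htail, hsdef]
    ring
  -- y ≠ x
  have hne : y ≠ x := by
    intro h
    rw [h] at hinf
    exact hinf hx
  -- agreement
  refine ⟨y, hne, hkfy, ?_⟩
  intro i hi
  have hmem : ((i:ℕ) ∈ ksupp y) ↔ ((i:ℕ) ∈ ksupp x) := by
    rw [hrange]
    constructor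
    · rintro ⟨n, hn⟩
      have hnk : n < k := by
        by_contra hnk
        have := hbM (n - k)
        simp only [hedef, if_neg hnk] at hn
        omega
      simp only [hedef, if_pos hnk] at hn
      rw [← hn]
      exact hnthx_mem n hnk
    · intro hmem
      obtain ⟨n, hn, hn2⟩ := Nat.exists_lt_card_finite_nth_eq hx hmem
      exact ⟨n, by simp only [hedef, if_pos (by rw [← hcard]; exact hn : n < k)]; exact hn2⟩
  have hx_iff : ((i:ℕ) ∈ ksupp x) ↔ x i = true := by
    constructor
    · rintro ⟨h0, hxi⟩; exact hxi
    · intro hxi; exact ⟨i.pos, hxi⟩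
  have hy_iff : ((i:ℕ) ∈ ksupp y) ↔ y i = true := by
    constructor
    · rintro ⟨h0, hyi⟩; exact hyi
    · intro hyi; exact ⟨i.pos, hyi⟩
  rw [hx_iff, hy_iff] at hmem
  cases hxv : x i with
  | true => exact hmem.mpr hxv
  | false =>
    cases hyv : y i with
    | true => rw [hmem.mp hyv] at hxv; exact absurd hxv (by simp)
    | false => rfl

/-- Let `x ∈ D` with `k = k_x = |supp x|` and `t ∈ [−1,1]`.  Then `x` is an accumulation
point of `f⁻¹({t})` if and only if `f(x) − 2^{−k} ≤ t ≤ f(x) + 2^{−k}`. -/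
theorem kf_accumulation_iff (x : Cant) (hx : (ksupp x).Finite) (t : ℝ)
    (ht : t ∈ Icc (-1 : ℝ) 1) :
    x ∈ closure ((kf ⁻¹' {t}) \ {x}) ↔
      kf x - (2 : ℝ) ^ (-((ksupp x).ncard : ℤ)) ≤ t ∧
        t ≤ kf x + (2 : ℝ) ^ (-((ksupp x).ncard : ℤ)) := by
  obtain ⟨M, hM⟩ : ∃ M : ℕ, ∀ i ∈ ksupp x, i ≤ M := by
    obtain ⟨M, hM⟩ := hx.bddAbove
    exact ⟨M, fun i hi => hM hi⟩
  constructor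
  · intro hcl
    by_contra hcon
    rw [not_and_or] at hcon
    have hU : {y : Cant | ∀ i : ℕ+, (i:ℕ) ≤ M → y i = x i} ∈ nhds x := by
      have heq : {y : Cant | ∀ i : ℕ+, (i:ℕ) ≤ M → y i = x i} =
          ⋂ i ∈ {i : ℕ+ | (i:ℕ) ≤ M}, (fun y : Cant => y i) ⁻¹' {x i} := by
        ext y
        simp [Set.mem_iInter]
      rw [heq]
      apply IsOpen.mem_nhds
      · apply Set.Finite.isOpen_biInter
        · have : {i : ℕ+ | (i:ℕ) ≤ M} = ((↑) : ℕ+ → ℕ) ⁻¹' (Set.Iic M) := rfl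
          rw [this]
          exact Set.Finite.preimage PNat.coe_injective.injOn (Set.finite_Iic M)
        · intro i _
          exact (isOpen_discrete _).preimage (continuous_apply i)
      · simp [Set.mem_iInter]
    obtain ⟨y, hyU, hyS⟩ := mem_closure_iff_nhds.mp hcl _ hU
    have hbound := kf_dist_le x y hx hM hyU
    have hkfy : kf y = t := hyS.1
    rw [hkfy, abs_le] at hbound
    rcases hcon with h | h
    · exact h (by linarith [hbound.1])
    · exact h (by linarith [hbound.2])
  · rintro ⟨h1, h2⟩
    have hseq : ∀ N : ℕ, ∃ y : Cant, y ≠ x ∧ kf y = t ∧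
        ∀ i : ℕ+, (i:ℕ) ≤ max M N → y i = x i :=
      fun N => exists_point x hx (fun i hi => le_trans (hM i hi) (le_max_left _ _)) h1 h2
    choose Y hYne hYkf hYagree using hseq
    have htend : Filter.Tendsto Y Filter.atTop (nhds x) := by
      rw [tendsto_pi_nhds]
      intro i
      apply tendsto_nhds_of_eventually_eq
      filter_upwards [Filter.eventually_ge_atTop (i:ℕ)] with N hN
      exact hYagree N i (le_max_of_le_right hN)
    apply mem_closure_of_tendsto htend
    filter_upwards with N
    exact ⟨hYkf N, hYne N⟩
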